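/- Suppose the sample selection is ignorable in the sense that (Y₂(w) - Y₁) is conditionally independent of the stratum V given G, for w ∈ {0,1}, and parallel trends holds: E[Y₂(0) - Y₁ | G=1] = E[Y₂(0) - Y₁ | G=0]. Then the complete-case DiD estimand E[Y₂ - Y₁ | G=1, S₂=1] - E[Y₂ - Y₁ | G=0, S₂=1] equals the ATT, E[Y₂(1) - Y₂(0) | G=1]. -/

import Mathlib

open MeasureTheory ProbabilityTheory

/-- Conditional expectation of `X` given the event `A`. -/
noncomputable def cE {Ω : Type*} [MeasurableSpace Ω] (μ : Measure Ω)
    (X : Ω → ℝ) (A : Set Ω) : ℝ :=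
  (∫ ω in A, X ω ∂μ) / (μ A).toReal

lemma cond_setIntegral {Ω : Type*} [MeasurableSpace Ω] (μ : Measure Ω) [IsProbabilityMeasure μ]
    (X : Ω → ℝ) {A s : Set Ω} (hs : MeasurableSet s) :
    ∫ ω in s, X ω ∂(μ[|A]) = ((μ A).toReal)⁻¹ * ∫ ω in A ∩ s, X ω ∂μ := by
  rw [ProbabilityTheory.cond, Measure.restrict_smul, Measure.restrict_restrict hs,
    integral_smul_measure, Set.inter_comm, ENNReal.toReal_inv, smul_eq_mul]

lemma cE_inter_of_indep {Ω : Type*} [MeasurableSpace Ω] (μ : Measure Ω) [IsProbabilityMeasure μ]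
    {X : Ω → ℝ} {T : Ω → ℕ × ℕ} {A : Set Ω} (hA : MeasurableSet A)
    (hX : Integrable X μ) (hmT : Measurable T)
    {B : Set (ℕ × ℕ)} (hB : MeasurableSet B)
    (hAne : μ A ≠ 0) (hne : μ (A ∩ T ⁻¹' B) ≠ 0)
    (hindep : IndepFun X T (μ[|A])) :
    cE μ X (A ∩ T ⁻¹' B) = cE μ X A := by
  set ν := μ[|A] with hν
  have hBT : MeasurableSet (T ⁻¹' B) := hmT hB
  set f : Ω → ℝ := (T ⁻¹' B).indicator (fun _ => (1:ℝ)) with hf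
  have hindf : IndepFun X f ν := by
    have h : IndepFun (id ∘ X) ((B.indicator fun _ => (1:ℝ)) ∘ T) ν :=
      hindep.comp measurable_id (measurable_const.indicator hB)
    have heq : f = (B.indicator fun _ => (1:ℝ)) ∘ T := by
      funext ω
      by_cases h' : T ω ∈ B <;> simp [hf, Set.indicator, h', Function.comp]
    rw [heq]
    exact h
  have hXν : Integrable X ν := by
    have h1 : Integrable X (μ.restrict A) := hX.restrict
    have h2 := h1.smul_measure (c := (μ A)⁻¹) (by simp [hAne])
    simpa [hν, ProbabilityTheory.cond] using h2
  haveI : IsProbabilityMeasure ν := cond_isProbabilityMeasure hAne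
  have hfν : Integrable f ν := (integrable_const (1:ℝ)).indicator hBT
  have hmul := hindf.integral_mul_eq_mul_integral hXν.aestronglyMeasurable hfν.aestronglyMeasurable
  have hXf : (X * f) = (T ⁻¹' B).indicator X := by
    funext ω; by_cases h : ω ∈ T ⁻¹' B <;> simp [hf, Set.indicator, h]
  rw [hXf, integral_indicator hBT, hf, integral_indicator hBT,
    setIntegral_const, smul_eq_mul, mul_one] at hmul
  -- rewrite ν-integrals in terms of μ
  have hAmeas : ν (T ⁻¹' B) = (μ A)⁻¹ * μ (A ∩ T ⁻¹' B) := cond_apply hA μ _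
  have e1 : ∫ ω in T ⁻¹' B, X ω ∂ν = ((μ A).toReal)⁻¹ * ∫ ω in A ∩ T ⁻¹' B, X ω ∂μ :=
    cond_setIntegral μ X hBT
  have e2 : ∫ ω, X ω ∂ν = ((μ A).toReal)⁻¹ * ∫ ω in A, X ω ∂μ := by
    have := cond_setIntegral μ X (A := A) MeasurableSet.univ
    simpa using this
  set pA := (μ A).toReal with hpA
  set p := (μ (A ∩ T ⁻¹' B)).toReal with hp
  have hpA0 : pA ≠ 0 := by
    simp [hpA, ENNReal.toReal_ne_zero, hAne, measure_ne_top]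
  have hp0 : p ≠ 0 := by
    simp [hp, ENNReal.toReal_ne_zero, hne, measure_ne_top]
  have hν3 : (ν (T ⁻¹' B)).toReal = pA⁻¹ * p := by
    rw [hAmeas, ENNReal.toReal_mul, ENNReal.toReal_inv]
  rw [e1, e2, measureReal_def, hν3] at hmul
  set I1 := ∫ ω in A ∩ T ⁻¹' B, X ω ∂μ
  set IA := ∫ ω in A, X ω ∂μ
  unfold cE
  rw [← hp, ← hpA, div_eq_div_iff hp0 hpA0]
  field_simp at hmul
  apply mul_right_cancel₀ hpA0
  linear_combination pA * hmul

theorem stmt_18 {Ω : Type*} [MeasurableSpace Ω] (μ : Measure Ω) [IsProbabilityMeasure μ]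
    (Y1 Y20 Y21 : Ω → ℝ) (S20 S21 : Ω → ℕ) (G : Ω → ℕ)
    (hint1 : Integrable Y1 μ) (hint20 : Integrable Y20 μ) (hint21 : Integrable Y21 μ)
    (hmY1 : Measurable Y1) (hmY20 : Measurable Y20) (hmY21 : Measurable Y21)
    (hmS20 : Measurable S20) (hmS21 : Measurable S21) (hmG : Measurable G)
    (hS20 : ∀ ω, S20 ω ≤ 1) (hS21 : ∀ ω, S21 ω ≤ 1)
    (hindep0 : ∀ g ∈ ({0, 1} : Set ℕ),
      IndepFun (fun ω => Y20 ω - Y1 ω) (fun ω => (S21 ω, S20 ω)) (μ[|{ω | G ω = g}]))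
    (hindep1 : ∀ g ∈ ({0, 1} : Set ℕ),
      IndepFun (fun ω => Y21 ω - Y1 ω) (fun ω => (S21 ω, S20 ω)) (μ[|{ω | G ω = g}]))
    (hpt : cE μ (fun ω => Y20 ω - Y1 ω) {ω | G ω = 1}
      = cE μ (fun ω => Y20 ω - Y1 ω) {ω | G ω = 0})
    (hG1 : μ {ω | G ω = 1} ≠ 0)
    (hpos1 : μ {ω | G ω = 1 ∧ (if G ω = 1 then S21 ω else S20 ω) = 1} ≠ 0)
    (hpos0 : μ {ω | G ω = 0 ∧ (if G ω = 1 then S21 ω else S20 ω) = 1} ≠ 0) :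
    cE μ (fun ω => (if G ω = 1 then Y21 ω else Y20 ω) - Y1 ω)
        {ω | G ω = 1 ∧ (if G ω = 1 then S21 ω else S20 ω) = 1}
      - cE μ (fun ω => (if G ω = 1 then Y21 ω else Y20 ω) - Y1 ω)
          {ω | G ω = 0 ∧ (if G ω = 1 then S21 ω else S20 ω) = 1}
      = cE μ (fun ω => Y21 ω - Y20 ω) {ω | G ω = 1} := by
  set T : Ω → ℕ × ℕ := fun ω => (S21 ω, S20 ω) with hT
  have hmT : Measurable T := hmS21.prodMk hmS20
  set A1 : Set Ω := {ω | G ω = 1} with hA1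
  set A0 : Set Ω := {ω | G ω = 0} with hA0
  have hmA1 : MeasurableSet A1 := hmG (measurableSet_singleton 1)
  have hmA0 : MeasurableSet A0 := hmG (measurableSet_singleton 0)
  set B1 : Set (ℕ × ℕ) := {p | p.1 = 1} with hB1
  set B0 : Set (ℕ × ℕ) := {p | p.2 = 1} with hB0
  have hmB1 : MeasurableSet B1 := measurable_fst (measurableSet_singleton 1)
  have hmB0 : MeasurableSet B0 := measurable_snd (measurableSet_singleton 1)
  have hset1 : {ω | G ω = 1 ∧ (if G ω = 1 then S21 ω else S20 ω) = 1} = A1 ∩ T ⁻¹' B1 := by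
    ext ω
    simp only [Set.mem_setOf_eq, Set.mem_inter_iff, Set.mem_preimage, hA1, hB1, hT]
    constructor
    · rintro ⟨h, h2⟩; rw [if_pos h] at h2; exact ⟨h, h2⟩
    · rintro ⟨h, h2⟩; exact ⟨h, by rw [if_pos h]; exact h2⟩
  have hset0 : {ω | G ω = 0 ∧ (if G ω = 1 then S21 ω else S20 ω) = 1} = A0 ∩ T ⁻¹' B0 := by
    ext ω
    simp only [Set.mem_setOf_eq, Set.mem_inter_iff, Set.mem_preimage, hA0, hB0, hT]
    constructor
    · rintro ⟨h, h2⟩; rw [if_neg (by omega)] at h2; exact ⟨h, h2⟩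
    · rintro ⟨h, h2⟩; exact ⟨h, by rw [if_neg (by omega)]; exact h2⟩
  rw [hset1] at hpos1
  rw [hset0] at hpos0
  rw [hset1, hset0]
  have hG0 : μ A0 ≠ 0 := fun h => hpos0 (measure_mono_null Set.inter_subset_left h)
  -- replace the observed integrand by the potential outcomes on each event
  have hcong1 : cE μ (fun ω => (if G ω = 1 then Y21 ω else Y20 ω) - Y1 ω) (A1 ∩ T ⁻¹' B1)
      = cE μ (fun ω => Y21 ω - Y1 ω) (A1 ∩ T ⁻¹' B1) := by
    unfold cE; congr 1
    refine setIntegral_congr_fun (hmA1.inter (hmT hmB1)) fun ω hω => ?_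
    have : G ω = 1 := hω.1
    simp [this]
  have hcong0 : cE μ (fun ω => (if G ω = 1 then Y21 ω else Y20 ω) - Y1 ω) (A0 ∩ T ⁻¹' B0)
      = cE μ (fun ω => Y20 ω - Y1 ω) (A0 ∩ T ⁻¹' B0) := by
    unfold cE; congr 1
    refine setIntegral_congr_fun (hmA0.inter (hmT hmB0)) fun ω hω => ?_
    have h : G ω = 0 := hω.1
    rw [if_neg (by omega)]
  rw [hcong1, hcong0]
  have h1 : cE μ (fun ω => Y21 ω - Y1 ω) (A1 ∩ T ⁻¹' B1)
      = cE μ (fun ω => Y21 ω - Y1 ω) A1 :=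
    cE_inter_of_indep μ hmA1 (hint21.sub hint1) hmT hmB1 hG1 hpos1
      (hindep1 1 (by simp))
  have h0 : cE μ (fun ω => Y20 ω - Y1 ω) (A0 ∩ T ⁻¹' B0)
      = cE μ (fun ω => Y20 ω - Y1 ω) A0 :=
    cE_inter_of_indep μ hmA0 (hint20.sub hint1) hmT hmB0 hG0 hpos0
      (hindep0 0 (by simp))
  rw [h1, h0, ← hpt]
  unfold cE
  rw [div_sub_div_same]
  congr 1
  have hsub := integral_sub (μ := μ.restrict A1) (f := fun ω => Y21 ω - Y1 ω)
    (g := fun ω => Y20 ω - Y1 ω) ((hint21.sub hint1).restrict) ((hint20.sub hint1).restrict)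
  rw [← hsub]
  congr 1
  funext ω
  ring
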